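/- For every integer s ≥ 2 and every x ∈ [1/4, 1), the function p(θ) = sin((s+1)θ) + 3sin(sθ) - 4sin((s-1)θ) - 4sin(θ) satisfies p(xπ/s) < 0. -/

import Mathlib

set_option maxHeartbeats 1000000

open Real

/-- For every integer `s ≥ 2` and `x ∈ [1/4, 1)`,
`p(xπ/s) < 0` where `p(θ) = sin((s+1)θ) + 3sin(sθ) - 4sin((s-1)θ) - 4sin θ`. -/
theorem p_neg_on_interval (s : ℕ) (hs : 2 ≤ s) (x : ℝ) (hx : x ∈ Set.Ico (1/4 : ℝ) 1) :
    Real.sin (((s : ℝ) + 1) * (x * π / s)) + 3 * Real.sin ((s : ℝ) * (x * π / s))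
      - 4 * Real.sin (((s : ℝ) - 1) * (x * π / s)) - 4 * Real.sin (x * π / s) < 0 := by
  obtain ⟨hx1, hx2⟩ := hx
  have hπ : (0:ℝ) < π := Real.pi_pos
  have hsR : (2:ℝ) ≤ (s:ℝ) := by exact_mod_cast hs
  have hs0 : (0:ℝ) < (s:ℝ) := by linarith only [hsR]
  have hx0 : (0:ℝ) < x := by linarith only [hx1]
  have hxπpos : 0 < x * π := by positivity
  set θ : ℝ := x * π / s with hθdef
  have hθ0 : 0 < θ := by positivity
  have hsθ : (s:ℝ) * θ = x * π := by rw [hθdef]; field_simp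
  have hθle : θ ≤ x * π / 2 := by
    rw [hθdef]
    apply div_le_div_of_nonneg_left (by positivity) (by norm_num) hsR
  have hxπlt : x * π < π := by
    have h := mul_lt_mul_of_pos_right hx2 hπ
    linarith only [h]
  have hxπge : π / 4 ≤ x * π := by
    have h := mul_nonneg (by linarith only [hx1] : (0:ℝ) ≤ x - 1/4) hπ.le
    linarith only [h]
  have hxπ4 : x * π / 4 < π / 4 := by linarith only [hxπlt]
  have h1 : ((s:ℝ) + 1) * θ = x * π + θ := by rw [add_mul, hsθ, one_mul]
  have h2 : ((s:ℝ) - 1) * θ = x * π - θ := by rw [sub_mul, hsθ, one_mul]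
  rw [h1, h2, hsθ, Real.sin_add, Real.sin_sub]
  have hSpos : 0 < Real.sin (x * π) := Real.sin_pos_of_pos_of_lt_pi hxπpos hxπlt
  -- key inequality: 3 sin(xπ)(1 - cos θ) < sin θ (4 - 5 cos(xπ))
  have key : 3 * Real.sin (x * π) * (1 - Real.cos θ) <
      Real.sin θ * (4 - 5 * Real.cos (x * π)) := by
    have hsh : Real.sin θ = 2 * Real.sin (θ/2) * Real.cos (θ/2) := by
      rw [← Real.sin_two_mul]; ring_nf
    have hch : Real.cos θ = 2 * Real.cos (θ/2)^2 - 1 := by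
      rw [← Real.cos_two_mul]; ring_nf
    have hpy : Real.sin (θ/2)^2 + Real.cos (θ/2)^2 = 1 := Real.sin_sq_add_cos_sq _
    have hshpos : 0 < Real.sin (θ/2) :=
      Real.sin_pos_of_pos_of_lt_pi (by positivity)
        (by linarith only [hθle, hxπ4, hπ])
    -- reduce to: 3 sin(xπ) sin(θ/2) < cos(θ/2) (4 - 5 cos(xπ))
    have main : 3 * Real.sin (x * π) * Real.sin (θ/2) <
        Real.cos (θ/2) * (4 - 5 * Real.cos (x * π)) := by
      have hhalf : θ/2 ≤ x * π / 4 := by linarith only [hθle]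
      have hsle : Real.sin (θ/2) ≤ Real.sin (x * π / 4) :=
        Real.sin_le_sin_of_le_of_le_pi_div_two
          (by linarith only [hθ0, hπ]) (by linarith only [hxπ4, hπ]) hhalf
      have hcle : Real.cos (x * π / 4) ≤ Real.cos (θ/2) :=
        Real.cos_le_cos_of_nonneg_of_le_pi (by positivity)
          (by linarith only [hxπ4, hπ]) hhalf
      have hcos4 : Real.cos (x * π) ≤ Real.cos (π/4) :=
        Real.cos_le_cos_of_nonneg_of_le_pi (by positivity)
          (by linarith only [hxπlt]) hxπge
      have hsqrt2 : Real.sqrt 2 < 1.5 := by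
        rw [show (1.5:ℝ) = Real.sqrt (1.5^2) by rw [Real.sqrt_sq]; norm_num]
        exact Real.sqrt_lt_sqrt (by norm_num) (by norm_num)
      have hCxpos : 0 < 4 - 5 * Real.cos (x * π) := by
        rw [Real.cos_pi_div_four] at hcos4
        linarith only [hcos4, hsqrt2]
      -- core inequality at xπ/4
      have core : 3 * Real.sin (x * π) * Real.sin (x * π / 4) <
          Real.cos (x * π / 4) * (4 - 5 * Real.cos (x * π)) := by
        set c₂ := Real.cos (x * π / 2) with hc₂def
        set s₄ := Real.sin (x * π / 4) with hs₄def
        set c₄ := Real.cos (x * π / 4) with hc₄def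
        have hS : Real.sin (x * π) = 2 * Real.sin (x * π / 2) * c₂ := by
          rw [hc₂def, ← Real.sin_two_mul]; ring_nf
        have hs₂ : Real.sin (x * π / 2) = 2 * s₄ * c₄ := by
          rw [hs₄def, hc₄def, ← Real.sin_two_mul]; ring_nf
        have hCx : Real.cos (x * π) = 2 * c₂^2 - 1 := by
          rw [hc₂def, ← Real.cos_two_mul]; ring_nf
        have hc₂eq : c₂ = 2 * c₄^2 - 1 := by
          rw [hc₂def, hc₄def, ← Real.cos_two_mul]; ring_nf
        have hpy4 : s₄^2 + c₄^2 = 1 := Real.sin_sq_add_cos_sq _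
        have hc₄pos : 0 < c₄ :=
          Real.cos_pos_of_mem_Ioo
            ⟨by linarith only [hπ, hxπpos], by linarith only [hxπ4, hπ]⟩
        have hc₂pos : 0 < c₂ :=
          Real.cos_pos_of_mem_Ioo
            ⟨by linarith only [hπ, hxπpos], by linarith only [hxπlt, hπ]⟩
        have hc₂le : c₂ ≤ Real.cos (π/8) :=
          Real.cos_le_cos_of_nonneg_of_le_pi (by positivity)
            (by linarith only [hxπlt, hπ]) (by linarith only [hxπge])
        have hkey : 4 * c₂^2 + 6 * c₂ < 9 := by
          rw [Real.cos_pi_div_eight] at hc₂le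
          have ha : Real.sqrt (2 + Real.sqrt 2) ^ 2 = 2 + Real.sqrt 2 :=
            Real.sq_sqrt (by positivity)
          have hb' : Real.sqrt 2 < 1.42 := by
            rw [show (1.42:ℝ) = Real.sqrt (1.42^2) by
              rw [Real.sqrt_sq (by norm_num)]]
            exact Real.sqrt_lt_sqrt (by norm_num) (by norm_num)
          have ha' : Real.sqrt (2 + Real.sqrt 2) < 1.86 := by
            rw [show (1.86:ℝ) = Real.sqrt (1.86^2) by
              rw [Real.sqrt_sq (by norm_num)]]
            exact Real.sqrt_lt_sqrt (by positivity)
              (by linarith only [hb'] : (2:ℝ) + Real.sqrt 2 < 1.86^2)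
          have h4 : 4 * c₂^2 ≤ Real.sqrt (2 + Real.sqrt 2) ^ 2 := by
            have h := mul_le_mul hc₂le hc₂le hc₂pos.le (by positivity)
            linarith only [h]
          linarith only [h4, ha, hb', ha', hc₂le]
        have hs₄sq : s₄^2 = (1 - c₂) / 2 := by linear_combination hpy4 + hc₂eq / 2
        have hkey' : (6 - 6*c₂)*c₂ < 9 - 10*c₂^2 := by linarith only [hkey]
        rw [hS, hs₂, hCx]
        calc 3 * (2 * (2 * s₄ * c₄) * c₂) * s₄ = ((6 - 6*c₂)*c₂) * c₄ := by
              linear_combination (12*c₄*c₂) * hs₄sq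
          _ < (9 - 10*c₂^2) * c₄ := mul_lt_mul_of_pos_right hkey' hc₄pos
          _ = c₄ * (4 - 5 * (2 * c₂^2 - 1)) := by ring
      calc 3 * Real.sin (x * π) * Real.sin (θ/2)
          ≤ 3 * Real.sin (x * π) * Real.sin (x * π / 4) := by
            have h := mul_le_mul_of_nonneg_left hsle
              (by positivity : (0:ℝ) ≤ 3 * Real.sin (x * π))
            linarith only [h]
        _ < Real.cos (x * π / 4) * (4 - 5 * Real.cos (x * π)) := core
        _ ≤ Real.cos (θ/2) * (4 - 5 * Real.cos (x * π)) :=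
            mul_le_mul_of_nonneg_right hcle hCxpos.le
    rw [hsh, hch]
    calc 3 * Real.sin (x * π) * (1 - (2 * Real.cos (θ/2)^2 - 1))
        = (3 * Real.sin (x * π) * Real.sin (θ/2)) * (2 * Real.sin (θ/2)) := by
          linear_combination (-6 * Real.sin (x * π)) * hpy
      _ < (Real.cos (θ/2) * (4 - 5 * Real.cos (x * π))) * (2 * Real.sin (θ/2)) :=
          mul_lt_mul_of_pos_right main (by linarith only [hshpos])
      _ = 2 * Real.sin (θ/2) * Real.cos (θ/2) * (4 - 5 * Real.cos (x * π)) := by ring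
  have expand : Real.sin (x * π) * Real.cos θ + Real.cos (x * π) * Real.sin θ
      + 3 * Real.sin (x * π)
      - 4 * (Real.sin (x * π) * Real.cos θ - Real.cos (x * π) * Real.sin θ)
      - 4 * Real.sin θ
      = 3 * Real.sin (x * π) * (1 - Real.cos θ)
        - Real.sin θ * (4 - 5 * Real.cos (x * π)) := by ring
  linarith only [expand, key]
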